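/- Let A be a congruence-distributive algebra which is local (i.e., A has exactly one maximal congruence μ) and such that every congruence of A other than ∇_A is included in μ. Then A has the FCLP and the CBLP. -/

import Mathlib

/-! Universal-algebra framework: algebras over a signature, congruences,
factor congruences, lifting properties. -/

structure Signature where
  ops : Type
  arity : ops → ℕ

structure Alg (σ : Signature) where
  carrier : Type
  interp : ∀ f : σ.ops, (Fin (σ.arity f) → carrier) → carrier

namespace Alg

variable {σ : Signature}

/-- A congruence: an equivalence relation compatible with all operations. -/
def IsCon (A : Alg σ) (r : A.carrier → A.carrier → Prop) : Prop :=
  Equivalence r ∧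
    ∀ (f : σ.ops) (x y : Fin (σ.arity f) → A.carrier),
      (∀ i, r (x i) (y i)) → r (A.interp f x) (A.interp f y)

/-- The least congruence `Δ_A`. -/
def delta (A : Alg σ) : A.carrier → A.carrier → Prop := fun a b => a = b

/-- The greatest congruence `∇_A = A²`. -/
def nabla (A : Alg σ) : A.carrier → A.carrier → Prop := fun _ _ => True

/-- Meet (intersection) of congruences. -/
def conMeet (A : Alg σ) (r s : A.carrier → A.carrier → Prop) :
    A.carrier → A.carrier → Prop := fun a b => r a b ∧ s a b

/-- Join of congruences: the least congruence containing both. -/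
def conJoin (A : Alg σ) (r s : A.carrier → A.carrier → Prop) :
    A.carrier → A.carrier → Prop := fun a b =>
  ∀ t, A.IsCon t → (∀ x y, r x y → t x y) → (∀ x y, s x y → t x y) → t a b

/-- The congruence generated by a set of pairs. -/
def conGen (A : Alg σ) (X : Set (A.carrier × A.carrier)) :
    A.carrier → A.carrier → Prop := fun a b =>
  ∀ t, A.IsCon t → (∀ p ∈ X, t p.1 p.2) → t a b

/-- Composition of relations: `(a,b) ∈ comp r s` iff `(a,x) ∈ s` and `(x,b) ∈ r`
for some `x`. -/
def comp (A : Alg σ) (r s : A.carrier → A.carrier → Prop) :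
    A.carrier → A.carrier → Prop := fun a b => ∃ x, s a x ∧ r x b

/-- Factor congruences: congruences `φ` having a congruence `φ*` with
`φ ∨ φ* = ∇`, `φ ∩ φ* = Δ` and `φ ∘ φ* = φ* ∘ φ`. -/
def IsFC (A : Alg σ) (φ : A.carrier → A.carrier → Prop) : Prop :=
  A.IsCon φ ∧ ∃ ψ, A.IsCon ψ ∧ A.conJoin φ ψ = A.nabla ∧
    A.conMeet φ ψ = A.delta ∧ A.comp φ ψ = A.comp ψ φ

/-- Boolean congruences: complemented elements of the lattice `Con(A)`. -/
def IsBooleanCon (A : Alg σ) (φ : A.carrier → A.carrier → Prop) : Prop :=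
  A.IsCon φ ∧ ∃ ψ, A.IsCon ψ ∧ A.conJoin φ ψ = A.nabla ∧ A.conMeet φ ψ = A.delta

/-- `A` is congruence-distributive iff the lattice `Con(A)` is distributive. -/
def CongDistrib (A : Alg σ) : Prop :=
  ∀ r s t, A.IsCon r → A.IsCon s → A.IsCon t →
    A.conMeet r (A.conJoin s t) = A.conJoin (A.conMeet r s) (A.conMeet r t)

/-- `A` is congruence-permutable iff all congruences permute under composition. -/
def CongPermutable (A : Alg σ) : Prop :=
  ∀ r s, A.IsCon r → A.IsCon s → A.comp r s = A.comp s r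

/-- Arithmetical = congruence-distributive + congruence-permutable. -/
def Arithmetical (A : Alg σ) : Prop := A.CongDistrib ∧ A.CongPermutable

/-- The quotient algebra `A/θ`. -/
noncomputable def quotAlg (A : Alg σ) (θ : A.carrier → A.carrier → Prop) :
    Alg σ where
  carrier := Quot θ
  interp f x := Quot.mk θ (A.interp f fun i => (x i).out)

/-- The image `α/θ = {(a/θ, b/θ) : (a,b) ∈ α}` of a relation in the quotient. -/
def quotRel (A : Alg σ) (θ α : A.carrier → A.carrier → Prop) :
    Quot θ → Quot θ → Prop := fun x y =>
  ∃ a b, x = Quot.mk θ a ∧ y = Quot.mk θ b ∧ α a b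

/-- `θ` has the Factor Congruence Lifting Property: the Boolean morphism
`FC(θ) : FC(A) → FC(A/θ)`, `ψ ↦ (ψ ∨ θ)/θ`, is surjective. -/
def HasFCLP (A : Alg σ) (θ : A.carrier → A.carrier → Prop) : Prop :=
  ∀ γ, (A.quotAlg θ).IsFC γ →
    ∃ ψ, A.IsFC ψ ∧ A.quotRel θ (A.conJoin ψ θ) = γ

/-- `θ` has the Congruence Boolean Lifting Property: the Boolean morphism
`B(Con(A)) → B(Con(A/θ))`, `ψ ↦ (ψ ∨ θ)/θ`, is surjective. -/
def HasCBLP (A : Alg σ) (θ : A.carrier → A.carrier → Prop) : Prop :=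
  ∀ γ, (A.quotAlg θ).IsBooleanCon γ →
    ∃ ψ, A.IsBooleanCon ψ ∧ A.quotRel θ (A.conJoin ψ θ) = γ

/-- `A` has FCLP iff every congruence of `A` has FCLP. -/
def AlgFCLP (A : Alg σ) : Prop := ∀ θ, A.IsCon θ → A.HasFCLP θ

/-- `A` has CBLP iff every congruence of `A` has CBLP. -/
def AlgCBLP (A : Alg σ) : Prop := ∀ θ, A.IsCon θ → A.HasCBLP θ

/-- FC-normality. -/
def FCNormal (A : Alg σ) : Prop :=
  ∀ φ ψ, A.IsCon φ → A.IsCon ψ → A.comp φ ψ = A.nabla →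
    ∃ α β, A.IsFC α ∧ A.IsFC β ∧ A.conMeet α β = A.delta ∧
      A.comp φ α = A.nabla ∧ A.comp ψ β = A.nabla

/-- B-normality. -/
def BNormal (A : Alg σ) : Prop :=
  ∀ φ ψ, A.IsCon φ → A.IsCon ψ → A.conJoin φ ψ = A.nabla →
    ∃ α β, A.IsBooleanCon α ∧ A.IsBooleanCon β ∧ A.conMeet α β = A.delta ∧
      A.conJoin φ α = A.nabla ∧ A.conJoin ψ β = A.nabla

/-- Isomorphism of algebras. -/
def Iso (A B : Alg σ) : Prop :=
  ∃ e : A.carrier ≃ B.carrier,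
    ∀ (f : σ.ops) (x : Fin (σ.arity f) → A.carrier),
      e (A.interp f x) = B.interp f fun i => e (x i)

/-- Direct product of a finite family of algebras. -/
def prodAlg {n : ℕ} (B : Fin n → Alg σ) : Alg σ where
  carrier := ∀ i, (B i).carrier
  interp f x := fun i => (B i).interp f fun j => x j i

/-- The product congruence `θ₁ × … × θₙ`. -/
def prodRel {n : ℕ} (B : Fin n → Alg σ)
    (θ : ∀ i, (B i).carrier → (B i).carrier → Prop) :
    (prodAlg B).carrier → (prodAlg B).carrier → Prop :=
  fun x y => ∀ i, θ i (x i) (y i)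

/-- Maximal congruences: maximal elements of `(Con(A) \ {∇}, ⊆)`. -/
def IsMaxCon (A : Alg σ) (θ : A.carrier → A.carrier → Prop) : Prop :=
  A.IsCon θ ∧ θ ≠ A.nabla ∧
    ∀ ψ, A.IsCon ψ → ψ ≠ A.nabla → (∀ a b, θ a b → ψ a b) → ψ = θ

/-- Prime congruences. -/
def IsPrimeCon (A : Alg σ) (θ : A.carrier → A.carrier → Prop) : Prop :=
  A.IsCon θ ∧ ∀ α β, A.IsCon α → A.IsCon β →
    (∀ a b, α a b → β a b → θ a b) →
    (∀ a b, α a b → θ a b) ∨ ∀ a b, β a b → θ a b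

/-! ### Auxiliary lemmas -/

theorem aux_isCon_delta (A : Alg σ) : A.IsCon A.delta :=
  ⟨⟨fun _ => rfl, fun h => h.symm, fun h1 h2 => h1.trans h2⟩,
   fun _ x y h => congrArg _ (funext h)⟩

theorem aux_isCon_nabla (A : Alg σ) : A.IsCon A.nabla :=
  ⟨⟨fun _ => trivial, fun _ => trivial, fun _ _ => trivial⟩, fun _ _ _ _ => trivial⟩

theorem aux_isFC_delta (A : Alg σ) : A.IsFC A.delta := by
  refine ⟨A.aux_isCon_delta, A.nabla, A.aux_isCon_nabla, ?_, ?_, ?_⟩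
  · funext a b
    exact propext ⟨fun _ => trivial, fun _ t _ _ hs => hs a b trivial⟩
  · funext a b
    exact propext ⟨fun h => h.1, fun h => ⟨h, trivial⟩⟩
  · funext a b
    exact propext ⟨fun _ => ⟨a, rfl, trivial⟩, fun _ => ⟨b, trivial, rfl⟩⟩

theorem aux_isFC_nabla (A : Alg σ) : A.IsFC A.nabla := by
  refine ⟨A.aux_isCon_nabla, A.delta, A.aux_isCon_delta, ?_, ?_, ?_⟩
  · funext a b
    exact propext ⟨fun _ => trivial, fun _ t _ hr _ => hr a b trivial⟩
  · funext a b
    exact propext ⟨fun h => h.2, fun h => ⟨trivial, h⟩⟩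
  · funext a b
    exact propext ⟨fun _ => ⟨b, trivial, rfl⟩, fun _ => ⟨a, rfl, trivial⟩⟩

theorem aux_mk_eq_iff (A : Alg σ) {θ : A.carrier → A.carrier → Prop}
    (h : A.IsCon θ) {a b : A.carrier} : Quot.mk θ a = Quot.mk θ b ↔ θ a b := by
  constructor
  · intro he
    exact h.1.eqvGen_iff.1 (Quot.eq.1 he)
  · exact Quot.sound

theorem aux_theta_out (A : Alg σ) {θ : A.carrier → A.carrier → Prop}
    (h : A.IsCon θ) (a : A.carrier) : θ (Quot.mk θ a).out a :=
  (aux_mk_eq_iff A h).1 ((Quot.mk θ a).out_eq)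

theorem aux_isCon_conJoin (A : Alg σ) {r s : A.carrier → A.carrier → Prop}
    (_ : A.IsCon r) (_ : A.IsCon s) : A.IsCon (A.conJoin r s) :=
  ⟨⟨fun a t ht _ _ => ht.1.refl a,
    fun h t ht h1 h2 => ht.1.symm (h t ht h1 h2),
    fun h h' t ht h1 h2 => ht.1.trans (h t ht h1 h2) (h' t ht h1 h2)⟩,
   fun f x y h t ht h1 h2 => ht.2 f x y fun i => h i t ht h1 h2⟩

theorem aux_conJoin_delta (A : Alg σ) {θ : A.carrier → A.carrier → Prop}
    (hθ : A.IsCon θ) : A.conJoin A.delta θ = θ := by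
  funext a b
  apply propext
  constructor
  · intro h
    exact h θ hθ (fun x y hxy => hxy ▸ hθ.1.refl x) (fun _ _ h => h)
  · intro h t _ _ h2
    exact h2 a b h

theorem aux_conJoin_nabla (A : Alg σ) (θ : A.carrier → A.carrier → Prop) :
    A.conJoin A.nabla θ = A.nabla := by
  funext a b
  exact propext ⟨fun _ => trivial, fun _ t _ h1 _ => h1 a b trivial⟩

theorem aux_quotRel_self (A : Alg σ) {θ : A.carrier → A.carrier → Prop}
    (hθ : A.IsCon θ) : A.quotRel θ θ = fun x y => x = y := by
  funext x y
  apply propext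
  constructor
  · rintro ⟨a, b, rfl, rfl, hab⟩
    exact Quot.sound hab
  · rintro rfl
    obtain ⟨a, rfl⟩ := Quot.exists_rep x
    exact ⟨a, a, rfl, rfl, hθ.1.refl a⟩

theorem aux_quotRel_nabla (A : Alg σ) (θ : A.carrier → A.carrier → Prop) :
    A.quotRel θ A.nabla = fun _ _ => True := by
  funext x y
  apply propext
  refine ⟨fun _ => trivial, fun _ => ?_⟩
  obtain ⟨a, rfl⟩ := Quot.exists_rep x
  obtain ⟨b, rfl⟩ := Quot.exists_rep y
  exact ⟨a, b, rfl, rfl, trivial⟩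

/-- The key dichotomy: in the given situation, every Boolean congruence of a
quotient of `A` is either the diagonal or the full relation. -/
theorem aux_dichotomy (A : Alg σ) (μ : A.carrier → A.carrier → Prop)
    (hμ : A.IsMaxCon μ)
    (hall : ∀ ψ, A.IsCon ψ → ψ ≠ A.nabla → ∀ a b, ψ a b → μ a b)
    {θ : A.carrier → A.carrier → Prop} (hθ : A.IsCon θ)
    (γ : Quot θ → Quot θ → Prop) (hγ : (A.quotAlg θ).IsBooleanCon γ) :
    γ = (fun x y => x = y) ∨ γ = (fun _ _ => True) := by
  obtain ⟨hγc, δ, hδc, hjoin, hmeet⟩ := hγ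
  by_cases hθn : θ = A.nabla
  · subst hθn
    right
    funext x y
    apply propext
    refine ⟨fun _ => trivial, fun _ => ?_⟩
    obtain ⟨a, rfl⟩ := Quot.exists_rep x
    obtain ⟨b, rfl⟩ := Quot.exists_rep y
    have he : Quot.mk A.nabla a = Quot.mk A.nabla b := Quot.sound trivial
    rw [he]
    exact hγc.1.refl _
  -- pull back γ and δ to A
  · set γb : A.carrier → A.carrier → Prop :=
      fun a b => γ (Quot.mk θ a) (Quot.mk θ b) with hγbdef
    set δb : A.carrier → A.carrier → Prop :=
      fun a b => δ (Quot.mk θ a) (Quot.mk θ b) with hδbdef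
    have interp_mk : ∀ (f : σ.ops) (x : Fin (σ.arity f) → A.carrier),
        (A.quotAlg θ).interp f (fun i => Quot.mk θ (x i)) =
          Quot.mk θ (A.interp f x) := by
      intro f x
      show Quot.mk θ (A.interp f fun i => (Quot.mk θ (x i)).out) = _
      exact (aux_mk_eq_iff A hθ).2
        (hθ.2 f _ _ fun i => aux_theta_out A hθ (x i))
    have pullCon : ∀ (ρ : Quot θ → Quot θ → Prop), (A.quotAlg θ).IsCon ρ →
        A.IsCon (fun a b => ρ (Quot.mk θ a) (Quot.mk θ b)) := by
      intro ρ hρ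
      refine ⟨⟨fun a => hρ.1.refl _, fun h => hρ.1.symm h,
        fun h h' => hρ.1.trans h h'⟩, ?_⟩
      intro f x y h
      have := hρ.2 f (fun i => Quot.mk θ (x i)) (fun i => Quot.mk θ (y i)) h
      rwa [interp_mk, interp_mk] at this
    have hγb : A.IsCon γb := pullCon γ hγc
    have hδb : A.IsCon δb := pullCon δ hδc
    have hθγ : ∀ a b, θ a b → γb a b := by
      intro a b h
      show γ (Quot.mk θ a) (Quot.mk θ b)
      rw [Quot.sound h]
      exact hγc.1.refl _
    by_cases hg : γb = A.nabla
    · right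
      funext x y
      apply propext
      refine ⟨fun _ => trivial, fun _ => ?_⟩
      obtain ⟨a, rfl⟩ := Quot.exists_rep x
      obtain ⟨b, rfl⟩ := Quot.exists_rep y
      have : γb a b := by rw [hg]; trivial
      exact this
    by_cases hd : δb = A.nabla
    · left
      funext x y
      apply propext
      constructor
      · intro hxy
        have hδxy : δ x y := by
          obtain ⟨a, rfl⟩ := Quot.exists_rep x
          obtain ⟨b, rfl⟩ := Quot.exists_rep y
          have : δb a b := by rw [hd]; trivial
          exact this
        have h2 : (A.quotAlg θ).conMeet γ δ x y := ⟨hxy, hδxy⟩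
        rw [hmeet] at h2
        exact h2
      · rintro rfl
        exact hγc.1.refl x
    -- both pullbacks proper: contradiction
    · exfalso
      have hJcon : A.IsCon (A.conJoin γb δb) := aux_isCon_conJoin A hγb hδb
      have hθJ : ∀ a b, θ a b → A.conJoin γb δb a b :=
        fun a b h t _ h1 _ => h1 a b (hθγ a b h)
      -- push the join down to the quotient as a congruence t'
      set t' : Quot θ → Quot θ → Prop :=
        fun x y => A.conJoin γb δb x.out y.out with ht'def
      have ht' : (A.quotAlg θ).IsCon t' := by
        refine ⟨⟨fun x => hJcon.1.refl _, fun h => hJcon.1.symm h,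
          fun h h' => hJcon.1.trans h h'⟩, ?_⟩
        intro f x y h
        show A.conJoin γb δb ((A.quotAlg θ).interp f x).out
          ((A.quotAlg θ).interp f y).out
        have hmid : A.conJoin γb δb (A.interp f fun i => (x i).out)
            (A.interp f fun i => (y i).out) := hJcon.2 f _ _ h
        have hx : A.conJoin γb δb ((A.quotAlg θ).interp f x).out
            (A.interp f fun i => (x i).out) :=
          hθJ _ _ (aux_theta_out A hθ _)
        have hy : A.conJoin γb δb ((A.quotAlg θ).interp f y).out
            (A.interp f fun i => (y i).out) :=
          hθJ _ _ (aux_theta_out A hθ _)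
        exact hJcon.1.trans (hJcon.1.trans hx hmid) (hJcon.1.symm hy)
      have h1' : ∀ x y, γ x y → t' x y := by
        intro x y hxy
        have : γb x.out y.out := by
          show γ (Quot.mk θ x.out) (Quot.mk θ y.out)
          rw [Quot.out_eq, Quot.out_eq]
          exact hxy
        exact fun t _ h1 _ => h1 _ _ this
      have h2' : ∀ x y, δ x y → t' x y := by
        intro x y hxy
        have : δb x.out y.out := by
          show δ (Quot.mk θ x.out) (Quot.mk θ y.out)
          exact (congrArg₂ δ (Quot.out_eq x) (Quot.out_eq y)).mpr hxy
        exact fun t _ _ h2 => h2 _ _ this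
      have hJall : ∀ a b, A.conJoin γb δb a b := by
        intro a b
        have hj : (A.quotAlg θ).conJoin γ δ (Quot.mk θ a) (Quot.mk θ b) := by
          rw [hjoin]; trivial
        have ht'ab : t' (Quot.mk θ a) (Quot.mk θ b) := hj t' ht' h1' h2'
        have ha : A.conJoin γb δb a (Quot.mk θ a).out :=
          hJcon.1.symm (hθJ _ _ (aux_theta_out A hθ a))
        have hb : A.conJoin γb δb (Quot.mk θ b).out b :=
          hθJ _ _ (aux_theta_out A hθ b)
        exact hJcon.1.trans (hJcon.1.trans ha ht'ab) hb
      have hμall : μ = A.nabla := by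
        funext a b
        exact propext ⟨fun _ => trivial, fun _ =>
          hJall a b μ hμ.1 (hall γb hγb hg) (hall δb hδb hd)⟩
      exact hμ.2.1 hμall

end Alg

/-- A local congruence-distributive algebra whose (unique) maximal congruence
includes all proper congruences has the FCLP and the CBLP. -/
theorem stmt_16 {σ : Signature} (A : Alg σ) (hne : Nonempty A.carrier)
    (hcd : A.CongDistrib) (μ : A.carrier → A.carrier → Prop)
    (hμ : A.IsMaxCon μ) (huniq : ∀ μ', A.IsMaxCon μ' → μ' = μ)
    (hall : ∀ ψ, A.IsCon ψ → ψ ≠ A.nabla → ∀ a b, ψ a b → μ a b) :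
    A.AlgFCLP ∧ A.AlgCBLP := by
  constructor
  · intro θ hθ γ hγ
    have hγB : (A.quotAlg θ).IsBooleanCon γ :=
      ⟨hγ.1, hγ.2.elim fun ψ h => ⟨ψ, h.1, h.2.1, h.2.2.1⟩⟩
    rcases Alg.aux_dichotomy A μ hμ hall hθ γ hγB with h | h
    · exact ⟨A.delta, A.aux_isFC_delta,
        ((congrArg (A.quotRel θ) (A.aux_conJoin_delta hθ)).trans
          (Alg.aux_quotRel_self A hθ)).trans h.symm⟩
    · exact ⟨A.nabla, A.aux_isFC_nabla,
        ((congrArg (A.quotRel θ) (A.aux_conJoin_nabla θ)).trans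
          (Alg.aux_quotRel_nabla A θ)).trans h.symm⟩
  · intro θ hθ γ hγ
    rcases Alg.aux_dichotomy A μ hμ hall hθ γ hγ with h | h
    · refine ⟨A.delta, ?_, ((congrArg (A.quotRel θ) (A.aux_conJoin_delta hθ)).trans
          (Alg.aux_quotRel_self A hθ)).trans h.symm⟩
      obtain ⟨h1, ψ, h2, h3, h4, _⟩ := A.aux_isFC_delta
      exact ⟨h1, ψ, h2, h3, h4⟩
    · refine ⟨A.nabla, ?_, ((congrArg (A.quotRel θ) (A.aux_conJoin_nabla θ)).trans
          (Alg.aux_quotRel_nabla A θ)).trans h.symm⟩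
      obtain ⟨h1, ψ, h2, h3, h4, _⟩ := A.aux_isFC_nabla
      exact ⟨h1, ψ, h2, h3, h4⟩
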